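/- Let Bfly (the butterfly graph) be the graph on vertices {1,2,3,4,5} with edge set {12, 15, 25, 34, 35, 45} (two triangles sharing the vertex 5). For all real numbers λ₁ < λ₂ < λ₃, there exists a matrix A ∈ S(Bfly) that has the Strong Spectral Property and whose spectrum is the multiset {λ₁, λ₁, λ₂, λ₃, λ₃} (ordered multiplicity list (2,1,2)). -/

import Mathlib

open Matrix

/-- The geometric multiplicity of `lam` as an eigenvalue of `A`:
`dim ker (A - lam • I)`. -/
noncomputable def multOf {m : Type*} [Fintype m] [DecidableEq m]
    (A : Matrix m m ℝ) (lam : ℝ) : ℕ :=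
  Module.finrank ℝ (LinearMap.ker (A - lam • (1 : Matrix m m ℝ)).mulVecLin)

/-- The Strong Spectral Property. -/
def HasSSP {m : Type*} [Fintype m] [DecidableEq m] (A : Matrix m m ℝ) : Prop :=
  ∀ X : Matrix m m ℝ, X.IsSymm → Matrix.hadamard A X = 0 →
    Matrix.hadamard (1 : Matrix m m ℝ) X = 0 → A * X - X * A = 0 → X = 0

/-- `A ∈ S(G)`: `A` is symmetric and its off-diagonal nonzero pattern is given by `G`. -/
def InS {m : Type*} [Fintype m] [DecidableEq m]
    (G : SimpleGraph m) (A : Matrix m m ℝ) : Prop :=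
  A.IsSymm ∧ ∀ i j, i ≠ j → (A i j ≠ 0 ↔ G.Adj i j)


/-- The butterfly graph on vertices `{0,1,2,3,4}`: two triangles `{0,1,4}` and
`{2,3,4}` sharing the vertex `4`. -/
def butterfly : SimpleGraph (Fin 5) :=
  SimpleGraph.fromRel fun i j =>
    (i.val, j.val) ∈ [(0,1), (0,4), (1,4), (2,3), (2,4), (3,4)]

/-! ### Auxiliary construction -/

/-- The candidate matrix in `S(butterfly)`. -/
noncomputable def matA (l1 l2 l3 a b : ℝ) : Matrix (Fin 5) (Fin 5) ℝ :=
  !![(3*l1+l2)/4, (l2-l1)/4, 0, 0, a;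
     (l2-l1)/4, (3*l1+l2)/4, 0, 0, a;
     0, 0, (3*l3+l2)/4, (l2-l3)/4, b;
     0, 0, (l2-l3)/4, (3*l3+l2)/4, b;
     a, a, b, b, (l1+l3)/2]

/-- A matrix of eigenvectors of `matA`. -/
noncomputable def matU (l1 l2 l3 a b : ℝ) : Matrix (Fin 5) (Fin 5) ℝ :=
  !![1, 0, (l1-(l2+l3)/2)*a, (l2-(l2+l3)/2)*a, (l3-(l2+l3)/2)*a;
     -1, 0, (l1-(l2+l3)/2)*a, (l2-(l2+l3)/2)*a, (l3-(l2+l3)/2)*a;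
     0, 1, (l1-(l1+l2)/2)*b, (l2-(l1+l2)/2)*b, (l3-(l1+l2)/2)*b;
     0, -1, (l1-(l1+l2)/2)*b, (l2-(l1+l2)/2)*b, (l3-(l1+l2)/2)*b;
     0, 0, (l1-(l1+l2)/2)*(l1-(l2+l3)/2), (l2-(l1+l2)/2)*(l2-(l2+l3)/2), (l3-(l1+l2)/2)*(l3-(l2+l3)/2)]

/-- Squared norm of the eigenvector associated to `lam`. -/
noncomputable def nrm (l1 l2 l3 a b lam : ℝ) : ℝ :=
  2*((lam-(l2+l3)/2)*a)^2 + 2*((lam-(l1+l2)/2)*b)^2 + ((lam-(l1+l2)/2)*(lam-(l2+l3)/2))^2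

lemma matAU (l1 l2 l3 a b : ℝ) (h12 : l1 < l2) (h23 : l2 < l3)
    (ha2 : a^2 * (8*(l3-l1)) = (l2-l1)^2*(2*l3-l1-l2))
    (hb2 : b^2 * (8*(l3-l1)) = (l3-l2)^2*(l3+l2-2*l1)) :
    matA l1 l2 l3 a b * matU l1 l2 l3 a b
      = matU l1 l2 l3 a b * diagonal ![l1, l3, l1, l2, l3] := by
  have hq : (8:ℝ)*(l3-l1) ≠ 0 := by nlinarith
  ext i j
  fin_cases i <;> fin_cases j <;>
    simp [matA, matU, Matrix.mul_apply, Fin.sum_univ_five, Matrix.diagonal_apply,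
      Matrix.vecHead, Matrix.vecTail, Function.comp] <;>
    (try ring1)
  · apply mul_right_cancel₀ hq
    linear_combination (2*(l1-(l2+l3)/2))*ha2 + (2*(l1-(l1+l2)/2))*hb2
  · apply mul_right_cancel₀ hq
    linear_combination (2*(l2-(l2+l3)/2))*ha2 + (2*(l2-(l1+l2)/2))*hb2
  · apply mul_right_cancel₀ hq
    linear_combination (2*(l3-(l2+l3)/2))*ha2 + (2*(l3-(l1+l2)/2))*hb2

lemma matUtU (l1 l2 l3 a b : ℝ) (h12 : l1 < l2) (h23 : l2 < l3)
    (ha2 : a^2 * (8*(l3-l1)) = (l2-l1)^2*(2*l3-l1-l2))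
    (hb2 : b^2 * (8*(l3-l1)) = (l3-l2)^2*(l3+l2-2*l1)) :
    (matU l1 l2 l3 a b)ᵀ * matU l1 l2 l3 a b
      = diagonal ![2, 2, nrm l1 l2 l3 a b l1, nrm l1 l2 l3 a b l2, nrm l1 l2 l3 a b l3] := by
  have hq : (8:ℝ)*(l3-l1) ≠ 0 := by nlinarith
  ext i j
  fin_cases i <;> fin_cases j <;>
    simp [matU, nrm, Matrix.mul_apply, Fin.sum_univ_five, Matrix.diagonal_apply,
      Matrix.vecHead, Matrix.vecTail, Function.comp, Matrix.transpose_apply] <;>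
    (try ring1)
  · apply mul_right_cancel₀ hq
    linear_combination (2*(l1-(l2+l3)/2)*(l2-(l2+l3)/2))*ha2 + (2*(l1-(l1+l2)/2)*(l2-(l1+l2)/2))*hb2
  · apply mul_right_cancel₀ hq
    linear_combination (2*(l1-(l2+l3)/2)*(l3-(l2+l3)/2))*ha2 + (2*(l1-(l1+l2)/2)*(l3-(l1+l2)/2))*hb2
  · apply mul_right_cancel₀ hq
    linear_combination (2*(l2-(l2+l3)/2)*(l1-(l2+l3)/2))*ha2 + (2*(l2-(l1+l2)/2)*(l1-(l1+l2)/2))*hb2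
  · apply mul_right_cancel₀ hq
    linear_combination (2*(l2-(l2+l3)/2)*(l3-(l2+l3)/2))*ha2 + (2*(l2-(l1+l2)/2)*(l3-(l1+l2)/2))*hb2
  · apply mul_right_cancel₀ hq
    linear_combination (2*(l3-(l2+l3)/2)*(l1-(l2+l3)/2))*ha2 + (2*(l3-(l1+l2)/2)*(l1-(l1+l2)/2))*hb2
  · apply mul_right_cancel₀ hq
    linear_combination (2*(l3-(l2+l3)/2)*(l2-(l2+l3)/2))*ha2 + (2*(l3-(l1+l2)/2)*(l2-(l1+l2)/2))*hb2


lemma matA_InS (l1 l2 l3 a b : ℝ) (h12 : l1 < l2) (h23 : l2 < l3)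
    (ha0 : a ≠ 0) (hb0 : b ≠ 0) : InS butterfly (matA l1 l2 l3 a b) := by
  constructor
  · unfold Matrix.IsSymm
    ext i j
    fin_cases i <;> fin_cases j <;> rfl
  · have hd1 : ((l2 - l1)/4 : ℝ) ≠ 0 := ne_of_gt (by linarith)
    have hd2 : ((l2 - l3)/4 : ℝ) ≠ 0 := ne_of_lt (by linarith)
    intro i j hij
    fin_cases i <;> fin_cases j <;>
      simp_all [matA, butterfly, SimpleGraph.fromRel_adj] <;> decide

lemma matA_SSP (l1 l2 l3 a b : ℝ) (h12 : l1 < l2) (h23 : l2 < l3)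
    (ha0 : a ≠ 0) (hb0 : b ≠ 0) : HasSSP (matA l1 l2 l3 a b) := by
  intro X hsym hA hI hC
  set A := matA l1 l2 l3 a b with hAdef
  have hXs : ∀ i j, X j i = X i j := by
    intro i j
    have := congrFun (congrFun hsym i) j
    rwa [Matrix.transpose_apply] at this
  have hz : ∀ i j, A i j ≠ 0 → X i j = 0 := by
    intro i j h
    have := congrFun (congrFun hA i) j
    rw [Matrix.hadamard_apply] at this
    exact (mul_eq_zero.mp this).resolve_left h
  have hdiag : ∀ i, X i i = 0 := by
    intro i
    have := congrFun (congrFun hI i) i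
    simpa [Matrix.hadamard_apply, Matrix.one_apply] using this
  have hd1 : ((l2 - l1)/4 : ℝ) ≠ 0 := ne_of_gt (by linarith)
  have hd2 : ((l2 - l3)/4 : ℝ) ≠ 0 := ne_of_lt (by linarith)
  have z01 : X 0 1 = 0 := hz 0 1 (by rw [hAdef]; simpa [matA] using hd1)
  have z04 : X 0 4 = 0 := hz 0 4 (by rw [hAdef]; simpa [matA] using ha0)
  have z14 : X 1 4 = 0 := hz 1 4 (by rw [hAdef]; simpa [matA] using ha0)
  have z23 : X 2 3 = 0 := hz 2 3 (by rw [hAdef]; simpa [matA] using hd2)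
  have z24 : X 2 4 = 0 := hz 2 4 (by rw [hAdef]; simpa [matA] using hb0)
  have z34 : X 3 4 = 0 := hz 3 4 (by rw [hAdef]; simpa [matA] using hb0)
  have z10 : X 1 0 = 0 := (hXs 0 1).trans z01
  have z40 : X 4 0 = 0 := (hXs 0 4).trans z04
  have z41 : X 4 1 = 0 := (hXs 1 4).trans z14
  have z32 : X 3 2 = 0 := (hXs 2 3).trans z23
  have z42 : X 4 2 = 0 := (hXs 2 4).trans z24
  have z43 : X 4 3 = 0 := (hXs 3 4).trans z34
  have z20 : X 2 0 = X 0 2 := hXs 0 2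
  have z30 : X 3 0 = X 0 3 := hXs 0 3
  have z21 : X 2 1 = X 1 2 := hXs 1 2
  have z31 : X 3 1 = X 1 3 := hXs 1 3
  have d0 := hdiag 0; have d1 := hdiag 1; have d2' := hdiag 2
  have d3 := hdiag 3; have d4 := hdiag 4
  have h42 := congrFun (congrFun hC 4) 2
  have h43 := congrFun (congrFun hC 4) 3
  have h40 := congrFun (congrFun hC 4) 0
  have h02 := congrFun (congrFun hC 0) 2
  simp only [Matrix.sub_apply, Matrix.mul_apply, Fin.sum_univ_five, Matrix.zero_apply]
    at h42 h43 h40 h02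
  simp [hAdef, matA,
    z01, z04, z14, z23, z24, z34, z10, z40, z41, z32, z42, z43, z20, z30, z21, z31,
    d0, d1, d2', d3, d4] at h42 h43 h40 h02
  have e1 : X 1 2 = -X 0 2 := by
    have h' : a * (X 0 2 + X 1 2) = 0 := by linear_combination h42
    have := (mul_eq_zero.mp h').resolve_left ha0
    linarith
  have e2 : X 1 3 = -X 0 3 := by
    have h' : a * (X 0 3 + X 1 3) = 0 := by linear_combination h43
    have := (mul_eq_zero.mp h').resolve_left ha0
    linarith
  have e3 : X 0 3 = -X 0 2 := by
    have h' : b * (X 0 2 + X 0 3) = 0 := by linear_combination h40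
    have := (mul_eq_zero.mp h').resolve_left hb0
    linarith
  have x02 : X 0 2 = 0 := by
    rw [e1, e3] at h02
    have h13 : l1 - l3 ≠ 0 := ne_of_lt (by linarith)
    have h' : (l1 - l3) * X 0 2 = 0 := by linear_combination h02
    exact (mul_eq_zero.mp h').resolve_left h13
  have x03 : X 0 3 = 0 := by rw [e3, x02, neg_zero]
  have x12 : X 1 2 = 0 := by rw [e1, x02, neg_zero]
  have x13 : X 1 3 = 0 := by rw [e2, x03, neg_zero]
  ext i j
  fin_cases i <;> fin_cases j <;> simp only [Matrix.zero_apply] <;>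
    first
      | assumption
      | (rw [x02] at z20; assumption)
      | (rw [x03] at z30; assumption)
      | (rw [x12] at z21; assumption)
      | (rw [x13] at z31; assumption)

set_option maxRecDepth 40000 in
/-- For all `λ₁ < λ₂ < λ₃` there is an SSP matrix in `S(Bfly)` with spectrum
`{λ₁, λ₁, λ₂, λ₃, λ₃}` (ordered multiplicity list `(2,1,2)`). -/
theorem butterfly_oml212_spectrally_arbitrary_SSP (l1 l2 l3 : ℝ)
    (h12 : l1 < l2) (h23 : l2 < l3) :
    ∃ A : Matrix (Fin 5) (Fin 5) ℝ, InS butterfly A ∧ HasSSP A ∧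
      multOf A l1 = 2 ∧ multOf A l2 = 1 ∧ multOf A l3 = 2 ∧
      ∀ t, t ≠ l1 → t ≠ l2 → t ≠ l3 → multOf A t = 0 := by
  classical
  have h13 : l1 < l3 := h12.trans h23
  set a : ℝ := Real.sqrt ((l2-l1)^2*(2*l3-l1-l2)/(8*(l3-l1))) with ha_def
  set b : ℝ := Real.sqrt ((l3-l2)^2*(l3+l2-2*l1)/(8*(l3-l1))) with hb_def
  have hq0 : (0:ℝ) < 8*(l3-l1) := by linarith
  have hPa : (0:ℝ) < (l2-l1)^2*(2*l3-l1-l2) :=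
    mul_pos (pow_pos (by linarith) 2) (by linarith)
  have hPb : (0:ℝ) < (l3-l2)^2*(l3+l2-2*l1) :=
    mul_pos (pow_pos (by linarith) 2) (by linarith)
  have hapos : 0 < a := Real.sqrt_pos.mpr (div_pos hPa hq0)
  have hbpos : 0 < b := Real.sqrt_pos.mpr (div_pos hPb hq0)
  have ha0 : a ≠ 0 := ne_of_gt hapos
  have hb0 : b ≠ 0 := ne_of_gt hbpos
  have ha2 : a^2 * (8*(l3-l1)) = (l2-l1)^2*(2*l3-l1-l2) := by
    rw [ha_def, Real.sq_sqrt (le_of_lt (div_pos hPa hq0))]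
    exact div_mul_cancel₀ _ (ne_of_gt hq0)
  have hb2 : b^2 * (8*(l3-l1)) = (l3-l2)^2*(l3+l2-2*l1) := by
    rw [hb_def, Real.sq_sqrt (le_of_lt (div_pos hPb hq0))]
    exact div_mul_cancel₀ _ (ne_of_gt hq0)
  have hAU := matAU l1 l2 l3 a b h12 h23 ha2 hb2
  have hUtU := matUtU l1 l2 l3 a b h12 h23 ha2 hb2
  set A : Matrix (Fin 5) (Fin 5) ℝ := matA l1 l2 l3 a b with hAdef
  set U : Matrix (Fin 5) (Fin 5) ℝ := matU l1 l2 l3 a b with hUdef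
  -- positivity of the norms
  have hn : ∀ lam : ℝ, lam - (l1+l2)/2 ≠ 0 → lam - (l2+l3)/2 ≠ 0 →
      0 < nrm l1 l2 l3 a b lam := by
    intro lam h1 h2
    have h3 : 0 < ((lam-(l1+l2)/2)*(lam-(l2+l3)/2))^2 :=
      lt_of_le_of_ne (sq_nonneg _) (Ne.symm (pow_ne_zero 2 (mul_ne_zero h1 h2)))
    have h4 := sq_nonneg ((lam-(l2+l3)/2)*a)
    have h5 := sq_nonneg ((lam-(l1+l2)/2)*b)
    unfold nrm
    nlinarith
  have hn1 : 0 < nrm l1 l2 l3 a b l1 :=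
    hn l1 (by intro h; nlinarith) (by intro h; nlinarith)
  have hn2 : 0 < nrm l1 l2 l3 a b l2 :=
    hn l2 (by intro h; nlinarith) (by intro h; nlinarith)
  have hn3 : 0 < nrm l1 l2 l3 a b l3 :=
    hn l3 (by intro h; nlinarith) (by intro h; nlinarith)
  -- U is invertible
  have hdetU : IsUnit U.det := by
    have h := congrArg Matrix.det hUtU
    rw [Matrix.det_mul, Matrix.det_transpose, Matrix.det_diagonal, Fin.prod_univ_five] at h
    simp at h
    rw [isUnit_iff_ne_zero]
    intro h0
    rw [h0, mul_zero] at h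
    have hpos : (0:ℝ) < 2 * 2 * nrm l1 l2 l3 a b l1 * nrm l1 l2 l3 a b l2
        * nrm l1 l2 l3 a b l3 := by positivity
    linarith
  -- A is the conjugation of a diagonal matrix
  have hAeq : A = U * diagonal ![l1, l3, l1, l2, l3] * U⁻¹ := by
    calc A = A * (U * U⁻¹) := by rw [Matrix.mul_nonsing_inv U hdetU, Matrix.mul_one]
    _ = (A * U) * U⁻¹ := by rw [Matrix.mul_assoc]
    _ = U * diagonal ![l1, l3, l1, l2, l3] * U⁻¹ := by rw [hAU]
  have hconj : ∀ lam : ℝ, A - lam • (1 : Matrix (Fin 5) (Fin 5) ℝ)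
      = U * diagonal (fun i => ![l1, l3, l1, l2, l3] i - lam) * U⁻¹ := by
    intro lam
    have hD : diagonal ![l1, l3, l1, l2, l3] - lam • (1 : Matrix (Fin 5) (Fin 5) ℝ)
        = diagonal (fun i => ![l1, l3, l1, l2, l3] i - lam) := by
      ext i j
      rcases eq_or_ne i j with rfl | hne
      · simp [Matrix.diagonal_apply_eq, Matrix.one_apply_eq]
      · simp [Matrix.diagonal_apply_ne _ hne, Matrix.one_apply_ne hne]
    rw [← hD, hAeq, Matrix.mul_sub, Matrix.sub_mul, Matrix.mul_smul, Matrix.mul_one,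
      Matrix.smul_mul, Matrix.mul_nonsing_inv U hdetU]
  have hrank : ∀ lam : ℝ, (A - lam • (1 : Matrix (Fin 5) (Fin 5) ℝ)).rank
      = Fintype.card {i : Fin 5 // ![l1, l3, l1, l2, l3] i - lam ≠ 0} := by
    intro lam
    rw [hconj lam,
      Matrix.rank_mul_eq_left_of_isUnit_det _ _ (Matrix.isUnit_nonsing_inv_det U hdetU),
      Matrix.rank_mul_eq_right_of_isUnit_det _ _ hdetU, Matrix.rank_diagonal]
  have hmult : ∀ lam : ℝ, multOf A lam
      + (A - lam • (1 : Matrix (Fin 5) (Fin 5) ℝ)).rank = 5 := by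
    intro lam
    have h := LinearMap.finrank_range_add_finrank_ker
      (A - lam • (1 : Matrix (Fin 5) (Fin 5) ℝ)).mulVecLin
    rw [Module.finrank_fin_fun] at h
    unfold multOf Matrix.rank
    omega
  -- cardinalities of the eigenvalue patterns
  have h21 : l2 ≠ l1 := ne_of_gt h12
  have h31 : l3 ≠ l1 := ne_of_gt h13
  have h32 : l3 ≠ l2 := ne_of_gt h23
  have card1 : Fintype.card {i : Fin 5 // ![l1,l3,l1,l2,l3] i - l1 ≠ 0} = 3 := by
    rw [Fintype.card_subtype]
    have hf : (Finset.univ.filter fun i : Fin 5 => ![l1,l3,l1,l2,l3] i - l1 ≠ 0)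
        = {1, 3, 4} := by
      ext i
      fin_cases i <;> simp [sub_ne_zero, h31, h21]
    rw [hf]
    rfl
  have card2 : Fintype.card {i : Fin 5 // ![l1,l3,l1,l2,l3] i - l2 ≠ 0} = 4 := by
    rw [Fintype.card_subtype]
    have hf : (Finset.univ.filter fun i : Fin 5 => ![l1,l3,l1,l2,l3] i - l2 ≠ 0)
        = {0, 1, 2, 4} := by
      ext i
      fin_cases i <;> simp [sub_ne_zero, h12.ne, h32]
    rw [hf]
    rfl
  have card3 : Fintype.card {i : Fin 5 // ![l1,l3,l1,l2,l3] i - l3 ≠ 0} = 3 := by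
    rw [Fintype.card_subtype]
    have hf : (Finset.univ.filter fun i : Fin 5 => ![l1,l3,l1,l2,l3] i - l3 ≠ 0)
        = {0, 2, 3} := by
      ext i
      fin_cases i <;> simp [sub_ne_zero, h13.ne, h23.ne]
    rw [hf]
    rfl
  have cardt : ∀ t : ℝ, t ≠ l1 → t ≠ l2 → t ≠ l3 →
      Fintype.card {i : Fin 5 // ![l1,l3,l1,l2,l3] i - t ≠ 0} = 5 := by
    intro t ht1 ht2 ht3
    rw [Fintype.card_subtype]
    have hf : (Finset.univ.filter fun i : Fin 5 => ![l1,l3,l1,l2,l3] i - t ≠ 0)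
        = Finset.univ := by
      ext i
      fin_cases i <;>
        simp [sub_ne_zero, Ne.symm ht1, Ne.symm ht2, Ne.symm ht3]
    rw [hf]
    rfl
  have m1 : multOf A l1 = 2 := by
    have h := hmult l1
    rw [hrank l1, card1] at h
    omega
  have m2 : multOf A l2 = 1 := by
    have h := hmult l2
    rw [hrank l2, card2] at h
    omega
  have m3 : multOf A l3 = 2 := by
    have h := hmult l3
    rw [hrank l3, card3] at h
    omega
  refine ⟨A, matA_InS l1 l2 l3 a b h12 h23 ha0 hb0, matA_SSP l1 l2 l3 a b h12 h23 ha0 hb0,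
    m1, m2, m3, ?_⟩
  intro t ht1 ht2 ht3
  have h := hmult t
  rw [hrank t, cardt t ht1 ht2 ht3] at h
  omega
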